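/- Consider the symmetric two-population SIS model with real parameters τ, β, γ, d₁, d₂, h₁. Suppose (y₁, y₂) is an equilibrium, i.e., τ(1−y₁)(d₁y₁ + d₂y₂) + βh₁(1−y₁)y₁² = γy₁ and τ(1−y₂)(d₂y₁ + d₁y₂) + βh₁(1−y₂)y₂² = γy₂, and suppose y₁ ≠ y₂. Then γ(d₂(y₁+y₂) + (d₁−d₂)y₁y₂) = βh₁((d₁−d₂)y₁y₂ + d₂(y₁+y₂)²)(1−y₁)(1−y₂). -/
import Mathlib


/-- If `(y₁,y₂)` is a nonsymmetric equilibrium (`y₁ ≠ y₂`) of the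
symmetric two-population SIS model, then, eliminating `τ`,
`γ(d₂(y₁+y₂) + (d₁−d₂)y₁y₂) = βh₁((d₁−d₂)y₁y₂ + d₂(y₁+y₂)²)(1−y₁)(1−y₂)`. -/
theorem symmetric_nonsymmetric_equilibrium_relation (τ β γ d₁ d₂ h₁ : ℝ)
    (y₁ y₂ : ℝ)
    (heq₁ : τ * (1 - y₁) * (d₁ * y₁ + d₂ * y₂) + β * h₁ * (1 - y₁) * y₁ ^ 2 = γ * y₁)
    (heq₂ : τ * (1 - y₂) * (d₂ * y₁ + d₁ * y₂) + β * h₁ * (1 - y₂) * y₂ ^ 2 = γ * y₂)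
    (hne : y₁ ≠ y₂) :
    γ * (d₂ * (y₁ + y₂) + (d₁ - d₂) * y₁ * y₂) =
      β * h₁ * ((d₁ - d₂) * y₁ * y₂ + d₂ * (y₁ + y₂) ^ 2) * (1 - y₁) * (1 - y₂) := by
  have h : y₂ - y₁ ≠ 0 := sub_ne_zero.mpr (Ne.symm hne)
  have key : (y₂ - y₁) * (γ * (d₂ * (y₁ + y₂) + (d₁ - d₂) * y₁ * y₂)) =
      (y₂ - y₁) * (β * h₁ * ((d₁ - d₂) * y₁ * y₂ + d₂ * (y₁ + y₂) ^ 2) * (1 - y₁) * (1 - y₂)) := by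
    linear_combination ((1 - y₂) * (d₂ * y₁ + d₁ * y₂)) * heq₁ -
      ((1 - y₁) * (d₁ * y₁ + d₂ * y₂)) * heq₂
  exact mul_left_cancel₀ h key
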